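/- arXiv:1802.10481 — 3 statements merged into one kernel-verified Lean document; each statement's English description precedes it below -/
import Mathlib

section
/- For integers H ≥ r ≥ 1 and 1 ≤ t, the number of t-subsets W of the K₀ = C(H,r) users (each user identified with a distinct r-subset of [H]) such that some relay h ∈ [H] is connected to all users in W (i.e., h belongs to every r-subset in W) equals Σ_{n=1}^{r} C(H,n)·C(K_n, t)·(-1)^{n-1}, where K_n = C(H-n, r-n). -/
open Finset

lemma count_supersets (s S : Finset ℕ) (r : ℕ) (hS : S ⊆ s) (hn : S.card ≤ r) :
    ((s.powersetCard r).filter (fun u => S ⊆ u)).card = (s.card - S.card).choose (r - S.card) := by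
  rw [← card_sdiff_of_subset hS, ← card_powersetCard]
  apply card_nbij' (fun u => u \ S) (fun v => v ∪ S)
  · intro u hu
    simp only [mem_coe, mem_filter, mem_powersetCard] at hu ⊢
    exact ⟨sdiff_subset_sdiff hu.1.1 le_rfl, by rw [card_sdiff_of_subset hu.2, hu.1.2]⟩
  · intro v hv
    simp only [mem_coe, mem_filter, mem_powersetCard] at hv ⊢
    have hd : Disjoint v S := disjoint_of_subset_left hv.1 sdiff_disjoint
    refine ⟨⟨union_subset (hv.1.trans sdiff_subset) hS, ?_⟩, subset_union_right⟩
    rw [card_union_of_disjoint hd, hv.2]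
    have := card_le_card hS
    omega
  · intro u hu
    simp only [mem_coe, mem_filter] at hu
    exact sdiff_union_of_subset hu.2
  · intro v hv
    simp only [mem_coe, mem_filter, mem_powersetCard] at hv
    exact union_sdiff_cancel_right (disjoint_of_subset_left hv.1 sdiff_disjoint)

/-- The set of `t`-subsets of the users (users = `r`-subsets of `[H]`, i.e. `Finset.range H`)
all of whose members share at least one common relay `h ∈ [H]`. -/
def Zset (H r t : ℕ) : Finset (Finset (Finset ℕ)) :=
  (((Finset.range H).powersetCard r).powersetCard t).filter
    (fun W => ∃ h ∈ Finset.range H, ∀ u ∈ W, h ∈ u)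

theorem stmt0 (H r t : ℕ) (hr : 1 ≤ r) (hH : r ≤ H) (ht : 1 ≤ t) :
    ((Zset H r t).card : ℤ) =
      ∑ n ∈ Finset.Icc 1 r,
        (H.choose n : ℤ) * (((H - n).choose (r - n)).choose t : ℤ) * (-1) ^ (n - 1) := by
  classical
  set users := (Finset.range H).powersetCard r with husers
  set A : ℕ → Finset (Finset (Finset ℕ)) :=
    fun h => ((users.filter (fun u => h ∈ u)).powersetCard t) with hA
  -- Zset as a union
  have hZ : Zset H r t = (Finset.range H).biUnion A := by
    ext W
    simp only [Zset, hA, mem_filter, mem_biUnion, mem_powersetCard]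
    constructor
    · rintro ⟨⟨hWsub, hWcard⟩, h, hh, hall⟩
      exact ⟨h, hh, fun u hu => mem_filter.2 ⟨hWsub hu, hall u hu⟩, hWcard⟩
    · rintro ⟨h, hh, hWsub, hWcard⟩
      exact ⟨⟨fun u hu => (mem_filter.1 (hWsub hu)).1, hWcard⟩, h, hh,
        fun u hu => (mem_filter.1 (hWsub hu)).2⟩
  -- the intersection over a nonempty S
  have hinf : ∀ (S : Finset ℕ) (hne : S.Nonempty), S ⊆ Finset.range H →
      S.inf' hne A = (users.filter (fun u => S ⊆ u)).powersetCard t := by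
    intro S hne _
    ext W
    simp only [mem_inf', hA, mem_powersetCard, mem_filter, subset_iff]
    constructor
    · intro h
      obtain ⟨i, hi⟩ := hne
      refine ⟨fun u hu => ⟨((h i hi).1 hu).1, fun j hj => ((h j hj).1 hu).2⟩, (h i hi).2⟩
    · intro h
      exact fun i hi => ⟨fun u hu => ⟨(h.1 hu).1, (h.1 hu).2 hi⟩, h.2⟩
  -- cardinality of the intersection
  have hcard : ∀ S : Finset ℕ, S ⊆ Finset.range H →
      (((users.filter (fun u => S ⊆ u)).powersetCard t).card : ℤ)
        = ((if S.card ≤ r then (H - S.card).choose (r - S.card) else 0).choose t : ℤ) := by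
    intro S hS
    rw [card_powersetCard]
    congr 2
    split_ifs with h
    · rw [count_supersets _ _ _ hS h, card_range]
    · rw [filter_false_of_mem, card_empty]
      intro u hu hsub
      rw [mem_powersetCard] at hu
      exact h (hu.2 ▸ card_le_card hsub)
  -- inclusion-exclusion
  have hIE : ((Zset H r t).card : ℤ) =
      ∑ S ∈ ((Finset.range H).powerset.filter (·.Nonempty)),
        (-1 : ℤ) ^ (S.card + 1) *
          ((if S.card ≤ r then (H - S.card).choose (r - S.card) else 0).choose t : ℤ) := by
    rw [hZ, Finset.inclusion_exclusion_card_biUnion]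
    rw [show (Finset.univ :
        Finset ((Finset.range H).powerset.filter (·.Nonempty) : Finset (Finset ℕ))) =
        ((Finset.range H).powerset.filter (·.Nonempty)).attach from rfl]
    refine (Finset.sum_congr rfl ?_).trans
      (Finset.sum_attach _ (fun (S : Finset ℕ) => (-1 : ℤ) ^ (S.card + 1) *
        ((if S.card ≤ r then (H - S.card).choose (r - S.card) else 0).choose t : ℤ)))
    intro x _
    have hx := Finset.mem_filter.1 x.2
    rw [hinf x.1 hx.2 (Finset.mem_powerset.1 hx.1), hcard x.1 (Finset.mem_powerset.1 hx.1)]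
  rw [hIE]
  -- group by cardinality
  rw [Finset.sum_filter, Finset.sum_powerset]
  rw [card_range]
  have hterm : ∀ n ∈ Finset.range (H + 1),
      (∑ S ∈ (Finset.range H).powersetCard n,
        if S.Nonempty then (-1 : ℤ) ^ (S.card + 1) *
          ((if S.card ≤ r then (H - S.card).choose (r - S.card) else 0).choose t : ℤ) else 0)
      = (H.choose n : ℤ) * (if 1 ≤ n ∧ n ≤ r then
          (((H - n).choose (r - n)).choose t : ℤ) * (-1) ^ (n - 1) else 0) := by
    intro n _
    have : ∀ S ∈ (Finset.range H).powersetCard n,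
        (if S.Nonempty then (-1 : ℤ) ^ (S.card + 1) *
          ((if S.card ≤ r then (H - S.card).choose (r - S.card) else 0).choose t : ℤ) else 0)
        = (if 1 ≤ n ∧ n ≤ r then
          (((H - n).choose (r - n)).choose t : ℤ) * (-1) ^ (n - 1) else 0) := by
      intro S hS
      have hcardS : S.card = n := (Finset.mem_powersetCard.1 hS).2
      have hne : S.Nonempty ↔ 1 ≤ n := by
        rw [← hcardS, Finset.one_le_card]
      rcases Nat.lt_or_ge n 1 with h1 | h1
      · rw [if_neg (by omega : ¬(1 ≤ n ∧ n ≤ r)), if_neg (by rw [hne]; omega)]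
      · rw [if_pos (hne.2 h1), hcardS]
        rcases le_or_gt n r with h2 | h2
        · rw [if_pos h2, if_pos ⟨h1, h2⟩]
          have : (-1 : ℤ) ^ (n + 1) = (-1) ^ (n - 1) := by
            have : n + 1 = (n - 1) + 2 := by omega
            rw [this, pow_add]
            ring
          rw [this]; ring
        · rw [if_neg (by omega), if_neg (by omega)]
          simp [Nat.choose_eq_zero_of_lt ht]
    rw [Finset.sum_congr rfl this, Finset.sum_const, card_powersetCard, card_range]
    push_cast
    ring
  rw [Finset.sum_congr rfl hterm]
  simp only [mul_ite, mul_zero]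
  rw [← Finset.sum_filter]
  have hset : (Finset.range (H + 1)).filter (fun n => 1 ≤ n ∧ n ≤ r) = Finset.Icc 1 r := by
    ext n
    simp only [Finset.mem_filter, Finset.mem_range, Finset.mem_Icc]
    omega
  rw [hset]
  exact Finset.sum_congr rfl fun n _ => by ring
end

section
/- For integers H ≥ r ≥ 1 and g with 1 ≤ g ≤ K₁ = C(H−1,r−1), the inclusion-exclusion sum |Z_g| = Σ_{n=1}^{r} C(H,n)·C(K_n, g)·(−1)^{n−1} is nonnegative, and is strictly positive for 1 ≤ g ≤ K₁. -/
open Finset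

private lemma card_filter_superset {H : ℕ} (r : ℕ) (t : Finset (Fin H)) (h : #t ≤ r) :
    #((Finset.univ.powersetCard r).filter (t ⊆ ·)) = (H - #t).choose (r - #t) := by
  have : #((tᶜ).powersetCard (r - #t)) = (H - #t).choose (r - #t) := by
    rw [card_powersetCard, card_compl, Fintype.card_fin]
  rw [← this]
  apply Finset.card_bij' (fun A _ => A \ t) (fun B _ => B ∪ t)
  · intro A hA
    simp only [mem_filter, mem_powersetCard] at hA
    simp only [mem_powersetCard]
    refine ⟨fun x hx => ?_, ?_⟩
    · simp only [mem_sdiff] at hx; simp [hx.2]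
    · rw [card_sdiff_of_subset hA.2, hA.1.2]
  · intro B hB
    simp only [mem_powersetCard] at hB
    simp only [mem_filter, mem_powersetCard]
    have hd : Disjoint B t := by
      rw [Finset.disjoint_left]; intro x hx; have := hB.1 hx; simpa using this
    refine ⟨⟨subset_univ _, ?_⟩, subset_union_right⟩
    rw [card_union_of_disjoint hd, hB.2]
    omega
  · intro A hA
    simp only [mem_filter] at hA
    exact sdiff_union_of_subset hA.2
  · intro B hB
    simp only [mem_powersetCard] at hB
    apply union_sdiff_cancel_right
    rw [Finset.disjoint_left]; intro x hx; have := hB.1 hx; simpa using this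

private lemma filter_superset_empty {H : ℕ} (r : ℕ) (t : Finset (Fin H)) (h : r < #t) :
    ((Finset.univ.powersetCard r).filter (t ⊆ ·)) = ∅ := by
  rw [filter_eq_empty_iff]
  intro A hA hsub
  have := card_le_card hsub
  rw [(mem_powersetCard.1 hA).2] at this
  omega

private lemma inf'_powersetCard {H : ℕ} (r g : ℕ) (t : Finset (Fin H)) (ht : t.Nonempty) :
    t.inf' ht (fun i => ((Finset.univ.powersetCard r).filter (i ∈ ·)).powersetCard g) =
      ((Finset.univ.powersetCard r).filter (t ⊆ ·)).powersetCard g := by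
  ext T
  simp only [mem_inf', mem_powersetCard, mem_filter, Finset.subset_iff]
  constructor
  · intro h
    obtain ⟨i, hi⟩ := ht
    exact ⟨fun {A} hA => ⟨((h i hi).1 hA).1, fun j hj => ((h j hj).1 hA).2⟩, (h i hi).2⟩
  · rintro ⟨h1, h2⟩ i hi
    exact ⟨fun {A} hA => ⟨(h1 hA).1, (h1 hA).2 hi⟩, h2⟩

theorem stmt12 (H r g : ℕ) (hr : 1 ≤ r) (hH : r ≤ H)
    (hg1 : 1 ≤ g) (hg2 : g ≤ (H - 1).choose (r - 1)) :
    0 ≤ (∑ n ∈ Finset.Icc 1 r,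
        (H.choose n : ℤ) * (((H - n).choose (r - n)).choose g : ℤ) * (-1) ^ (n - 1)) ∧
    0 < (∑ n ∈ Finset.Icc 1 r,
        (H.choose n : ℤ) * (((H - n).choose (r - n)).choose g : ℤ) * (-1) ^ (n - 1)) := by
  classical
  have hH1 : 1 ≤ H := le_trans hr hH
  set S : Fin H → Finset (Finset (Finset (Fin H))) :=
    fun i => (((Finset.univ : Finset (Fin H)).powersetCard r).filter (i ∈ ·)).powersetCard g with hS
  set G : ℕ → ℤ := fun n => if n = 0 then 0 else
    (-1 : ℤ) ^ (n + 1) * (((if n ≤ r then (H - n).choose (r - n) else 0)).choose g : ℤ) with hG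
  -- card of union equals grouped sum
  have key : (#((Finset.univ : Finset (Fin H)).biUnion S) : ℤ) =
      ∑ i ∈ range (H + 1), (H.choose i : ℤ) * G i := by
    rw [Finset.inclusion_exclusion_card_biUnion]
    have h1 : ∀ t : ((Finset.univ : Finset (Fin H)).powerset.filter (·.Nonempty)),
        (-1 : ℤ) ^ (#t.1 + 1) * #(t.1.inf' (mem_filter.1 t.2).2 S) = G #t.1 := by
      rintro ⟨t, ht⟩
      have htne : t.Nonempty := (mem_filter.1 ht).2
      simp only
      rw [hS, inf'_powersetCard, card_powersetCard, hG]
      have h0 : #t ≠ 0 := by simpa [card_eq_zero, ← nonempty_iff_ne_empty] using htne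
      simp only [if_neg h0]
      by_cases hc : #t ≤ r
      · rw [if_pos hc, card_filter_superset r t hc]
      · rw [if_neg hc, filter_superset_empty r t (by omega), card_empty]
    rw [Finset.sum_congr rfl (fun t _ => h1 t)]
    rw [Finset.sum_coe_sort (f := fun t => G #t)]
    rw [Finset.sum_filter]
    have h2 : ∀ t ∈ (Finset.univ : Finset (Fin H)).powerset,
        (if t.Nonempty then G #t else 0) = G #t := by
      intro t _
      by_cases hne : t.Nonempty
      · rw [if_pos hne]
      · rw [if_neg hne, not_nonempty_iff_eq_empty.1 hne]
        simp [hG]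
    rw [Finset.sum_congr rfl h2, Finset.sum_powerset_apply_card, card_univ, Fintype.card_fin]
    simp [nsmul_eq_mul, mul_comm]
  -- grouped sum equals the target sum
  have key2 : ∑ i ∈ range (H + 1), (H.choose i : ℤ) * G i =
      ∑ n ∈ Finset.Icc 1 r,
        (H.choose n : ℤ) * (((H - n).choose (r - n)).choose g : ℤ) * (-1) ^ (n - 1) := by
    rw [← Finset.sum_subset (s₁ := Finset.Icc 1 r)]
    · apply Finset.sum_congr rfl
      intro n hn
      simp only [Finset.mem_Icc] at hn
      rw [hG]
      simp only
      rw [if_neg (by omega), if_pos hn.2]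
      have : (-1 : ℤ) ^ (n + 1) = (-1) ^ (n - 1) := by
        have : n + 1 = (n - 1) + 2 := by omega
        rw [this, pow_add]
        ring
      rw [this]; ring
    · intro x hx
      simp only [Finset.mem_Icc] at hx
      simp only [Finset.mem_range]
      omega
    · intro x hx hx2
      simp only [Finset.mem_Icc] at hx2
      rw [hG]
      by_cases h0 : x = 0
      · simp [h0]
      · simp only [if_neg h0, if_neg (by omega : ¬ x ≤ r)]
        rw [Nat.choose_eq_zero_of_lt hg1]
        simp
  -- positivity: the union is nonempty
  have hpos : 0 < #((Finset.univ : Finset (Fin H)).biUnion S) := by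
    rw [card_pos]
    set i0 : Fin H := ⟨0, hH1⟩
    have hcard : #(((Finset.univ : Finset (Fin H)).powersetCard r).filter (i0 ∈ ·)) = (H - 1).choose (r - 1) := by
      have := card_filter_superset (H := H) r {i0} (by simpa using hr)
      simp only [card_singleton] at this
      rw [← this]
      congr 1
      apply filter_congr
      intro A _
      simp [singleton_subset_iff]
    obtain ⟨T, hT, hTcard⟩ := Finset.exists_subset_card_eq (show g ≤ _ by rw [hcard]; exact hg2)
    exact ⟨T, mem_biUnion.2 ⟨i0, mem_univ _, mem_powersetCard.2 ⟨hT, hTcard⟩⟩⟩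
  have : 0 < (∑ n ∈ Finset.Icc 1 r,
      (H.choose n : ℤ) * (((H - n).choose (r - n)).choose g : ℤ) * (-1) ^ (n - 1)) := by
    rw [← key2, ← key]
    exact_mod_cast hpos
  exact ⟨le_of_lt this, this⟩
end

section
/- For integers H ≥ r ≥ 1 and 0 ≤ t ≤ C(H,r), the two expressions for |Z₂| agree: Σ_{n=1}^{r} C(H,n)·C(C(H−n,r−n), 2)·(−1)^{n−1} = (1/2)·C(H,r)·(C(H,r) − 1 − C(H−r, r)). -/
open Finset

lemma keyT : ∀ (r M k : ℕ), r ≤ M →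
    (∑ n ∈ range (k+1), (-1:ℚ)^n * ((r.choose n : ℕ) : ℚ) * (((M - n).choose (k - n) : ℕ) : ℚ))
      = ((M - r).choose k : ℕ) := by
  intro r
  induction r with
  | zero =>
    intro M k _
    rw [Finset.sum_eq_single 0]
    · simp
    · intro b _ hb
      rcases Nat.exists_eq_succ_of_ne_zero hb with ⟨c, rfl⟩
      simp
    · simp
  | succ r ih =>
    intro M k h
    cases k with
    | zero => simp
    | succ k =>
      rw [Finset.sum_range_succ']
      have e1 : ∀ n ∈ range (k+1),
          (-1:ℚ)^(n+1) * (((r+1).choose (n+1) : ℕ) : ℚ) * (((M - (n+1)).choose (k+1 - (n+1)) : ℕ) : ℚ)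
          = (-1:ℚ)^(n+1) * ((r.choose (n+1) : ℕ) : ℚ) * ((((M-1) - n).choose (k - n) : ℕ) : ℚ)
            - (-1:ℚ)^n * ((r.choose n : ℕ) : ℚ) * ((((M-1) - n).choose (k - n) : ℕ) : ℚ) := by
        intro n _
        have h1 : M - (n+1) = (M-1) - n := by omega
        have h2 : k+1 - (n+1) = k - n := by omega
        rw [h1, h2, Nat.choose_succ_succ]
        push_cast
        ring
      rw [Finset.sum_congr rfl e1, Finset.sum_sub_distrib]
      have hM1 : r ≤ M - 1 := by omega
      have hihB := ih (M-1) k hM1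
      -- first part plus the n=0 term equals sum for (r, M, k+1)
      have hA : (∑ n ∈ range (k+1),
            (-1:ℚ)^(n+1) * ((r.choose (n+1) : ℕ) : ℚ) * ((((M-1) - n).choose (k - n) : ℕ) : ℚ))
          + (-1:ℚ)^0 * (((r+1).choose 0 : ℕ) : ℚ) * (((M - 0).choose (k+1 - 0) : ℕ) : ℚ)
          = ((M - r).choose (k+1) : ℕ) := by
        have := ih M (k+1) (by omega)
        rw [Finset.sum_range_succ'] at this
        rw [← this]
        congr 1
        apply Finset.sum_congr rfl
        intro n _
        have h1 : M - (n+1) = (M-1) - n := by omega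
        have h2 : k+1 - (n+1) = k - n := by omega
        rw [h1, h2]
        simp
      have hPascal : ((M - r).choose (k+1) : ℚ)
          = ((M - (r+1)).choose (k+1) : ℕ) + (((M-1) - r).choose k : ℕ) := by
        have h1 : M - r = (M - (r+1)) + 1 := by omega
        have h2 : (M-1) - r = M - (r+1) := by omega
        rw [h1, h2, Nat.choose_succ_succ]
        push_cast
        ring
      rw [hihB]
      have : (∑ n ∈ range (k+1),
            (-1:ℚ)^(n+1) * ((r.choose (n+1) : ℕ) : ℚ) * ((((M-1) - n).choose (k - n) : ℕ) : ℚ))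
          = ((M - r).choose (k+1) : ℕ)
            - (-1:ℚ)^0 * (((r+1).choose 0 : ℕ) : ℚ) * (((M - 0).choose (k+1 - 0) : ℕ) : ℚ) := by
        linarith [hA]
      rw [this]
      push_cast at hPascal ⊢
      linarith

lemma factored (H r : ℕ) (hH : r ≤ H) (f : ℕ → ℚ) :
    (∑ n ∈ range (r+1), (-1:ℚ)^n * (H.choose n : ℚ) * ((H - n).choose (r - n) : ℚ) * f ((H-n).choose (r-n)))
      = (H.choose r : ℚ) * ∑ n ∈ range (r+1), (-1:ℚ)^n * (r.choose n : ℚ) * f ((H-n).choose (r-n)) := by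
  rw [Finset.mul_sum]
  apply Finset.sum_congr rfl
  intro n hn
  have hn' : n ≤ r := by simpa [Nat.lt_succ_iff] using hn
  have := Nat.choose_mul (n := H) hn'
  have h2 : (H.choose n : ℚ) * ((H - n).choose (r - n) : ℚ) = (H.choose r : ℚ) * (r.choose n : ℚ) := by
    exact_mod_cast congrArg (Nat.cast (R := ℚ)) this.symm
  calc (-1:ℚ)^n * (H.choose n : ℚ) * ((H - n).choose (r - n) : ℚ) * f ((H-n).choose (r-n))
      = ((H.choose n : ℚ) * ((H - n).choose (r - n) : ℚ)) * ((-1:ℚ)^n * f ((H-n).choose (r-n))) := by ring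
    _ = ((H.choose r : ℚ) * (r.choose n : ℚ)) * ((-1:ℚ)^n * f ((H-n).choose (r-n))) := by rw [h2]
    _ = _ := by ring

lemma linSum (H r : ℕ) (hr : 1 ≤ r) (hH : r ≤ H) :
    (∑ n ∈ range (r+1), (-1:ℚ)^n * (H.choose n : ℚ) * ((H - n).choose (r - n) : ℚ)) = 0 := by
  have := factored H r hH (fun _ => 1)
  simp only [mul_one] at this
  rw [this]
  have h := Int.alternating_sum_range_choose_of_ne (n := r) (by omega)
  have : (∑ n ∈ range (r+1), (-1:ℚ)^n * (r.choose n : ℚ)) = 0 := by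
    exact_mod_cast congrArg (fun z : ℤ => (z : ℚ)) h
  rw [this, mul_zero]

lemma sqSum (H r : ℕ) (hH : r ≤ H) :
    (∑ n ∈ range (r+1), (-1:ℚ)^n * (H.choose n : ℚ) * ((H - n).choose (r - n) : ℚ)^2)
      = (H.choose r : ℚ) * ((H - r).choose r : ℚ) := by
  have := factored H r hH (fun m => (m : ℚ))
  have h2 : (∑ n ∈ range (r+1), (-1:ℚ)^n * (H.choose n : ℚ) * ((H - n).choose (r - n) : ℚ)^2)
      = ∑ n ∈ range (r+1), (-1:ℚ)^n * (H.choose n : ℚ) * ((H - n).choose (r - n) : ℚ) * (((H-n).choose (r-n) : ℕ) : ℚ) := by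
    apply Finset.sum_congr rfl; intro n _; ring
  rw [h2, this, keyT r H r hH]

theorem stmt17 (H r : ℕ) (hr : 1 ≤ r) (hH : r ≤ H) :
    (∑ n ∈ Finset.Icc 1 r,
        (H.choose n : ℚ) * (((H - n).choose (r - n)).choose 2 : ℚ) * (-1) ^ (n - 1))
      = (1 / 2) * (H.choose r : ℚ) *
          ((H.choose r : ℚ) - 1 - ((H - r).choose r : ℚ)) := by
  set h : ℕ → ℚ := fun n => (-1:ℚ)^n * (H.choose n : ℚ) *
      (((H - n).choose (r - n) : ℚ)^2 - ((H - n).choose (r - n) : ℚ)) * (1/2) with hh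
  have hstep : (∑ n ∈ Finset.Icc 1 r,
        (H.choose n : ℚ) * (((H - n).choose (r - n)).choose 2 : ℚ) * (-1) ^ (n - 1))
      = -(∑ n ∈ Finset.Icc 1 r, h n) := by
    rw [← Finset.sum_neg_distrib]
    apply Finset.sum_congr rfl
    intro n hn
    have hn1 : 1 ≤ n := (Finset.mem_Icc.mp hn).1
    obtain ⟨m, rfl⟩ := Nat.exists_eq_add_of_le hn1
    have hc2 : ((((H - (1+m)).choose (r - (1+m))).choose 2 : ℕ) : ℚ)
        = ((H - (1+m)).choose (r - (1+m)) : ℚ) * (((H - (1+m)).choose (r - (1+m)) : ℚ) - 1) / 2 := by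
      rw [Nat.cast_choose_two]
    have hm : 1 + m - 1 = m := by omega
    rw [hc2, hm]
    simp only [hh, pow_add, pow_one]
    ring
  have hsetsplit : Finset.range (r+1) = insert 0 (Finset.Icc 1 r) := by
    ext x; simp [Nat.lt_succ_iff]; omega
  have h0notin : (0:ℕ) ∉ Finset.Icc 1 r := by simp
  have hrangesum : (∑ n ∈ range (r+1), h n) = h 0 + ∑ n ∈ Finset.Icc 1 r, h n := by
    rw [hsetsplit, Finset.sum_insert h0notin]
  have hsum : (∑ n ∈ range (r+1), h n)
      = (1/2) * ((H.choose r : ℚ) * ((H - r).choose r : ℚ)) := by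
    have e : ∀ n ∈ range (r+1), h n
        = (1/2) * ((-1:ℚ)^n * (H.choose n : ℚ) * ((H - n).choose (r - n) : ℚ)^2)
          - (1/2) * ((-1:ℚ)^n * (H.choose n : ℚ) * ((H - n).choose (r - n) : ℚ)) := by
      intro n _; rw [hh]; ring
    rw [Finset.sum_congr rfl e, Finset.sum_sub_distrib, ← Finset.mul_sum, ← Finset.mul_sum,
      sqSum H r hH, linSum H r hr hH]
    ring
  have h0val : h 0 = (1/2) * ((H.choose r : ℚ)^2 - (H.choose r : ℚ)) := by
    rw [hh]; simp; ring
  rw [hstep]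
  have : (∑ n ∈ Finset.Icc 1 r, h n)
      = (1/2) * ((H.choose r : ℚ) * ((H - r).choose r : ℚ)) - h 0 := by
    linarith [hrangesum, hsum]
  rw [this, h0val]
  ring
end
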